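/- Airy function pointwise bounds: there is a constant c > 0 such that |Ai(x)| ≤ c e^{−(2/3) x^{3/2}} for all x ≥ 0, and |Ai(x)| ≤ c |x|^{−1/4} for all x < 0. -/

import Mathlib

open Real Filter Set

noncomputable def phiA (x : ℝ) : ℝ := Real.exp (-(2/3) * x ^ ((3:ℝ)/2))

lemma phiA_pos (x : ℝ) : 0 < phiA x := Real.exp_pos _

lemma hasDerivAt_phiA (x : ℝ) :
    HasDerivAt phiA (-(x ^ ((1:ℝ)/2)) * phiA x) x := by
  have h1 : HasDerivAt (fun y : ℝ => -(2/3) * y ^ ((3:ℝ)/2))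
      (-(2/3) * ((3:ℝ)/2 * x ^ ((3:ℝ)/2 - 1))) x :=
    (Real.hasDerivAt_rpow_const (Or.inr (by norm_num))).const_mul _
  have h2 := h1.exp
  refine h2.congr_deriv ?_
  have : (3:ℝ)/2 - 1 = 1/2 := by norm_num
  rw [this]
  unfold phiA
  ring

lemma deriv_phiA (x : ℝ) :
    deriv phiA x = -(x ^ ((1:ℝ)/2)) * phiA x := (hasDerivAt_phiA x).deriv

lemma phiA_diff : Differentiable ℝ phiA := fun x => (hasDerivAt_phiA x).differentiableAt

lemma hasDerivAt_deriv_phiA {x : ℝ} (hx : 0 < x) :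
    HasDerivAt (deriv phiA) (x * phiA x - (1/2) * x ^ (-(1:ℝ)/2) * phiA x) x := by
  have hev : (fun y => -(y ^ ((1:ℝ)/2)) * phiA y) =ᶠ[nhds x] deriv phiA := by
    filter_upwards [univ_mem] with y _
    exact (deriv_phiA y).symm
  have h1 : HasDerivAt (fun y : ℝ => y ^ ((1:ℝ)/2)) ((1:ℝ)/2 * x ^ ((1:ℝ)/2 - 1)) x :=
    Real.hasDerivAt_rpow_const (Or.inl hx.ne')
  have h2 : HasDerivAt (fun y : ℝ => -(y ^ ((1:ℝ)/2)) * phiA y)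
      (-((1:ℝ)/2 * x ^ ((1:ℝ)/2 - 1)) * phiA x +
        (-(x ^ ((1:ℝ)/2))) * (-(x ^ ((1:ℝ)/2)) * phiA x)) x :=
    (h1.neg).mul (hasDerivAt_phiA x)
  have h3 := h2.congr_of_eventuallyEq hev.symm
  refine h3.congr_deriv ?_
  have hxx : x ^ ((1:ℝ)/2) * x ^ ((1:ℝ)/2) = x := by
    rw [← Real.rpow_add hx]; norm_num
  have he : (1:ℝ)/2 - 1 = -(1:ℝ)/2 := by norm_num
  rw [he]
  nlinarith [phiA_pos x]

lemma phiA_tendsto : Tendsto phiA atTop (nhds 0) := by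
  have h1 : Tendsto (fun x : ℝ => x ^ ((3:ℝ)/2)) atTop atTop :=
    tendsto_rpow_atTop (by norm_num)
  have h2 : Tendsto (fun x : ℝ => -(2/3) * x ^ ((3:ℝ)/2)) atTop atBot :=
    h1.const_mul_atTop_of_neg (by norm_num)
  exact Real.tendsto_exp_atBot.comp h2

lemma phiA_one : phiA 1 = Real.exp (-(2/3)) := by
  unfold phiA; rw [Real.one_rpow, mul_one]


lemma minprin (d : ℝ → ℝ)
    (hdiff : Differentiable ℝ d)
    (hdiff2 : ∀ x > (1:ℝ), DifferentiableAt ℝ (deriv d) x)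
    (hineq : ∀ x ≥ (1:ℝ), deriv (deriv d) x ≤ x * d x)
    (h1 : 0 ≤ d 1) (h0 : Tendsto d atTop (nhds 0)) :
    ∀ x ≥ (1:ℝ), 0 ≤ d x := by
  by_contra hcon
  push_neg at hcon
  obtain ⟨m, hm1, hm⟩ := hcon
  -- find b beyond which d > d m
  have hev : ∀ᶠ x in atTop, d m < d x := by
    have := h0.eventually (eventually_gt_nhds hm)
    simpa using this
  obtain ⟨b, hb⟩ := hev.exists_forall_of_atTop
  set b' := max b (m + 1) with hb'
  have hmb' : m ≤ b' := le_trans (by linarith) (le_max_right _ _)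
  have h1b' : (1:ℝ) ≤ b' := le_trans hm1 hmb'
  -- min of d on [1, b']
  have hcpt : IsCompact (Icc (1:ℝ) b') := isCompact_Icc
  obtain ⟨p, hpmem, hpmin⟩ := hcpt.exists_isMinOn (nonempty_Icc.2 h1b')
    (hdiff.continuous.continuousOn)
  have hdp : d p ≤ d m := hpmin ⟨hm1, hmb'⟩
  have hdpneg : d p < 0 := lt_of_le_of_lt hdp hm
  have hp1 : 1 < p := by
    rcases lt_or_eq_of_le hpmem.1 with h | h
    · exact h
    · exfalso; rw [← h] at hdpneg; linarith
  -- global min on [1, ∞)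
  have hglob : ∀ y ≥ (1:ℝ), d p ≤ d y := by
    intro y hy
    rcases le_or_gt y b' with h | h
    · exact hpmin ⟨hy, h⟩
    · have : b ≤ y := le_trans (le_trans (le_max_left _ _) h.le) le_rfl
      exact le_trans hdp (hb y this).le
  -- local min ⇒ deriv d p = 0
  have hloc : IsLocalMin d p := by
    have : Ioi (1:ℝ) ∈ nhds p := Ioi_mem_nhds hp1
    exact Filter.eventually_of_mem this fun y hy => hglob y (le_of_lt hy)
  have hg0 : deriv d p = 0 := hloc.deriv_eq_zero
  -- find δ such that d < d p / 2 on [p, p+δ]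
  have hcont : ContinuousAt d p := hdiff.continuous.continuousAt
  have hev2 : ∀ᶠ y in nhds p, d y < d p / 2 ∧ 1 < y := by
    filter_upwards [hcont.eventually (eventually_lt_nhds (by linarith : d p < d p / 2)),
      eventually_gt_nhds hp1] with y h1 h2
    exact ⟨h1, h2⟩
  obtain ⟨δ, hδpos, hδ⟩ := Metric.eventually_nhds_iff_ball.1 hev2
  set δ' := δ / 2 with hδ'
  have hδ'pos : 0 < δ' := by positivity
  have hsub : Icc p (p + δ') ⊆ Metric.ball p δ := by
    intro y hy
    rw [Metric.mem_ball, Real.dist_eq, abs_lt]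
    constructor <;> [linarith [hy.1]; linarith [hy.2]]
  -- deriv (deriv d) < 0 on the ball part of [p, p+δ']
  have hgneg : ∀ y ∈ Ioc p (p + δ'), deriv d y < 0 := by
    -- first: deriv d strictly decreasing on [p, p+δ']
    have hanti : StrictAntiOn (deriv d) (Icc p (p + δ')) := by
      apply strictAntiOn_of_deriv_neg (convex_Icc _ _)
      · apply ContinuousOn.mono _ hsub
        intro y hy
        exact ((hdiff2 y (hδ _ hy).2).continuousAt).continuousWithinAt
      · intro y hy
        rw [interior_Icc] at hy
        have hyball : y ∈ Metric.ball p δ := hsub ⟨hy.1.le, hy.2.le⟩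
        have h1y : 1 < y := (hδ _ hyball).2
        have : deriv (deriv d) y ≤ y * d y := hineq y h1y.le
        have hdy : d y < d p / 2 := (hδ _ hyball).1
        nlinarith
    intro y hy
    have := hanti ⟨le_refl p, by linarith [hδ'pos]⟩ ⟨hy.1.le, hy.2⟩ hy.1
    rw [hg0] at this; exact this
  -- d strictly decreasing on [p, p+δ']
  have hanti2 : StrictAntiOn d (Icc p (p + δ')) := by
    apply strictAntiOn_of_deriv_neg (convex_Icc _ _) hdiff.continuous.continuousOn
    intro y hy
    rw [interior_Icc] at hy
    exact hgneg y ⟨hy.1, hy.2.le⟩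
  have hlt : d (p + δ') < d p :=
    hanti2 ⟨le_refl p, by linarith⟩ ⟨by linarith, le_refl _⟩ (by linarith)
  have : d p ≤ d (p + δ') := hglob _ (by linarith)
  linarith

lemma pos_aux (g : ℝ → ℝ) (hg : Differentiable ℝ g) (hg' : Differentiable ℝ (deriv g))
    (hODE : ∀ x, deriv (deriv g) x = x * g x) (hdecay : Tendsto g atTop (nhds 0))
    (C : ℝ) (hC : 0 ≤ C) (h1 : g 1 ≤ C * Real.exp (-(2/3))) :
    ∀ x ≥ (1:ℝ), g x ≤ C * phiA x := by
  set d : ℝ → ℝ := fun x => C * phiA x - g x with hd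
  have hderivd : ∀ x, deriv d x = C * deriv phiA x - deriv g x := by
    intro x
    rw [hd]
    rw [deriv_fun_sub ((phiA_diff x).const_mul C) (hg x), deriv_const_mul _ (phiA_diff x)]
  have hderivdf : deriv d = fun x => C * deriv phiA x - deriv g x := funext hderivd
  have hdd : ∀ x > (0:ℝ), HasDerivAt (deriv d)
      (C * (x * phiA x - (1/2) * x ^ (-(1:ℝ)/2) * phiA x) - deriv (deriv g) x) x := by
    intro x hx
    rw [hderivdf]
    exact ((hasDerivAt_deriv_phiA hx).const_mul C).sub ((hg' x).hasDerivAt)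
  have key : ∀ x ≥ (1:ℝ), 0 ≤ d x := by
    apply minprin d ((phiA_diff.const_mul C).sub hg)
    · intro x hx
      exact (hdd x (by linarith)).differentiableAt
    · intro x hx
      have h2 := (hdd x (by linarith)).deriv
      rw [h2, hODE x]
      have h3 : 0 ≤ (1/2) * x ^ (-(1:ℝ)/2) * phiA x := by
        have h3a := phiA_pos x
        have h3b : (0:ℝ) ≤ x ^ (-(1:ℝ)/2) := Real.rpow_nonneg (by linarith) _
        nlinarith
      have : x * d x = x * (C * phiA x) - x * g x := by rw [hd]; ring
      nlinarith
    · rw [hd]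
      simp only
      rw [phiA_one]; linarith
    · have : Tendsto (fun x => C * phiA x) atTop (nhds (C * 0)) :=
        phiA_tendsto.const_mul C
      rw [mul_zero] at this
      have h4 := this.sub hdecay
      rw [sub_zero] at h4
      exact h4
  intro x hx
  have := key x hx
  rw [hd] at this
  simp only at this
  linarith

lemma pos_side (Ai : ℝ → ℝ) (hAi : ContDiff ℝ 2 Ai)
    (hODE : ∀ x, deriv (deriv Ai) x = x * Ai x)
    (hdecay : Tendsto Ai atTop (nhds 0)) :
    ∃ c1 > 0, ∀ x : ℝ, 0 ≤ x → |Ai x| ≤ c1 * phiA x := by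
  have hAidiff : Differentiable ℝ Ai := hAi.differentiable (by norm_num)
  have hAi2 : ContDiff ℝ (1 + 1) Ai := by
    exact hAi.of_le (by norm_num)
  have hAi' : Differentiable ℝ (deriv Ai) :=
    (contDiff_succ_iff_deriv.mp hAi2).2.2.differentiable (by norm_num)
  set C := |Ai 1| * Real.exp (2/3) with hC
  have hCpos : 0 ≤ C := by positivity
  have hC1 : C * Real.exp (-(2/3)) = |Ai 1| := by
    rw [hC, mul_assoc, ← Real.exp_add]; norm_num
  have hup : ∀ x ≥ (1:ℝ), Ai x ≤ C * phiA x := by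
    apply pos_aux Ai hAidiff hAi' hODE hdecay C hCpos
    rw [hC1]; exact le_abs_self _
  have hdown : ∀ x ≥ (1:ℝ), -Ai x ≤ C * phiA x := by
    have hODE' : ∀ x, deriv (deriv (fun y => -Ai y)) x = x * (fun y => -Ai y) x := by
      intro x
      have h5 : deriv (fun y => -Ai y) = fun y => -deriv Ai y := by
        funext y; exact deriv.neg
      rw [h5]
      simp only
      rw [show (fun y => -deriv Ai y) = fun y => (-1 : ℝ) * deriv Ai y by funext y; ring,
        deriv_const_mul _ (hAi' x), hODE x]
      ring
    have hd' : deriv (fun y => -Ai y) = fun y => -deriv Ai y := by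
      funext y; exact deriv.neg
    have := pos_aux (fun y => -Ai y) hAidiff.neg (by rw [hd']; exact hAi'.neg)
      hODE' (by simpa using hdecay.neg) C hCpos (by rw [hC1]; simpa using neg_le_abs (Ai 1))
    simpa using this
  -- bound on [0, 1]
  obtain ⟨z, hz, hzmax⟩ := isCompact_Icc.exists_isMaxOn (nonempty_Icc.2 (by norm_num : (0:ℝ) ≤ 1))
    (continuous_abs.comp hAidiff.continuous).continuousOn
  set M := |Ai z| with hM
  have hM0 : 0 ≤ M := abs_nonneg _
  refine ⟨C + M * Real.exp (2/3) + 1, by nlinarith [Real.exp_pos (2/3 : ℝ)], ?_⟩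
  intro x hx
  rcases le_or_gt 1 x with h | h
  · have h6 : |Ai x| ≤ C * phiA x := abs_le.2 ⟨by linarith [hdown x h], hup x h⟩
    have : 0 ≤ (M * Real.exp (2/3) + 1) * phiA x :=
      mul_nonneg (by nlinarith [Real.exp_pos (2/3:ℝ)]) (phiA_pos x).le
    calc |Ai x| ≤ C * phiA x := h6
      _ ≤ (C + M * Real.exp (2/3) + 1) * phiA x := by nlinarith [phiA_pos x]
  · have hx1 : x ∈ Icc (0:ℝ) 1 := ⟨hx, h.le⟩
    have h7 : |Ai x| ≤ M := hzmax hx1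
    have h8 : Real.exp (-(2/3)) ≤ phiA x := by
      unfold phiA
      apply Real.exp_le_exp.2
      have h9 : x ^ ((3:ℝ)/2) ≤ 1 := Real.rpow_le_one hx h.le (by norm_num)
      nlinarith
    have h10 : M * Real.exp (2/3) * Real.exp (-(2/3)) = M := by
      rw [mul_assoc, ← Real.exp_add]; norm_num
    calc |Ai x| ≤ M := h7
      _ = M * Real.exp (2/3) * Real.exp (-(2/3)) := h10.symm
      _ ≤ M * Real.exp (2/3) * phiA x := by
          apply mul_le_mul_of_nonneg_left h8 (by positivity)
      _ ≤ (C + M * Real.exp (2/3) + 1) * phiA x := by nlinarith [phiA_pos x, phiA_pos x]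


section NegSide
variable (Ai : ℝ → ℝ)

noncomputable def NX (x : ℝ) : ℝ :=
  Real.sqrt (-x) * Ai x ^ 2 + (deriv Ai x) ^ 2 / Real.sqrt (-x)
    - Ai x * deriv Ai x / (2 * Real.sqrt (-x) ^ 3)

noncomputable def GX (x : ℝ) : ℝ := NX Ai x * Real.exp (1 / (3 * Real.sqrt (-x) ^ 3))

lemma hasDerivAt_sqrtneg {x : ℝ} (hx : x < 0) :
    HasDerivAt (fun y => Real.sqrt (-y)) (-(1 / (2 * Real.sqrt (-x)))) x := by
  have h1 : HasDerivAt (fun y : ℝ => -y) (-1) x := (hasDerivAt_id x).neg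
  have h2 := (Real.hasDerivAt_sqrt (show -x ≠ 0 by linarith)).comp x h1
  refine h2.congr_deriv ?_
  ring

lemma hasDerivAt_NX {x : ℝ} (hx : x < 0)
    (hu : HasDerivAt Ai (deriv Ai x) x)
    (hv : HasDerivAt (deriv Ai) (x * Ai x) x) :
    HasDerivAt (NX Ai) (-(3 / (4 * Real.sqrt (-x) ^ 5)) * (Ai x * deriv Ai x)) x := by
  have hs : 0 < Real.sqrt (-x) := Real.sqrt_pos.2 (by linarith)
  have hs2 : Real.sqrt (-x) ^ 2 = -x := Real.sq_sqrt (by linarith)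
  have hsder := hasDerivAt_sqrtneg hx
  have hA1 : HasDerivAt (fun y => Real.sqrt (-y) * Ai y ^ 2)
      (-(1 / (2 * Real.sqrt (-x))) * Ai x ^ 2
        + Real.sqrt (-x) * (2 * Ai x ^ 1 * deriv Ai x)) x :=
    hsder.mul (hu.pow 2)
  have hA2 : HasDerivAt (fun y => (deriv Ai y) ^ 2 / Real.sqrt (-y))
      ((2 * deriv Ai x ^ 1 * (x * Ai x) * Real.sqrt (-x)
        - (deriv Ai x) ^ 2 * (-(1 / (2 * Real.sqrt (-x))))) / Real.sqrt (-x) ^ 2) x :=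
    (hv.pow 2).div hsder hs.ne'
  have hden : HasDerivAt (fun y => 2 * Real.sqrt (-y) ^ 3)
      (2 * (3 * Real.sqrt (-x) ^ 2 * (-(1 / (2 * Real.sqrt (-x)))))) x := by
    have h := (hsder.pow 3).const_mul (2:ℝ)
    refine h.congr_deriv ?_; push_cast; ring
  have hA3 : HasDerivAt (fun y => Ai y * deriv Ai y / (2 * Real.sqrt (-y) ^ 3))
      (((deriv Ai x * deriv Ai x + Ai x * (x * Ai x)) * (2 * Real.sqrt (-x) ^ 3)
          - Ai x * deriv Ai x * (2 * (3 * Real.sqrt (-x) ^ 2 * (-(1 / (2 * Real.sqrt (-x)))))))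
        / (2 * Real.sqrt (-x) ^ 3) ^ 2) x :=
    (hu.mul hv).div hden (by positivity)
  have h := (hA1.add hA2).sub hA3
  refine h.congr_deriv ?_
  generalize hu' : Ai x = u
  generalize hv' : deriv Ai x = v
  generalize hs' : Real.sqrt (-x) = s
  have hs0 : 0 < s := hs' ▸ hs
  have hxs2 : x = -s ^ 2 := by rw [← hs']; linarith
  rw [hxs2]
  field_simp
  ring

lemma hasDerivAt_GX {x : ℝ} (hx : x < 0)
    (hu : HasDerivAt Ai (deriv Ai x) x)
    (hv : HasDerivAt (deriv Ai) (x * Ai x) x) :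
    HasDerivAt (GX Ai)
      (Real.exp (1 / (3 * Real.sqrt (-x) ^ 3)) *
        ((1 / (4 * Real.sqrt (-x) ^ 5)) *
          (2 * NX Ai x - 3 * (Ai x * deriv Ai x)))) x := by
  have hs : 0 < Real.sqrt (-x) := Real.sqrt_pos.2 (by linarith)
  have hsder := hasDerivAt_sqrtneg hx
  have hden : HasDerivAt (fun y => 3 * Real.sqrt (-y) ^ 3)
      (3 * (3 * Real.sqrt (-x) ^ 2 * (-(1 / (2 * Real.sqrt (-x)))))) x := by
    have h := (hsder.pow 3).const_mul (3:ℝ)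
    refine h.congr_deriv ?_; push_cast; ring
  have hq : HasDerivAt (fun y => 1 / (3 * Real.sqrt (-y) ^ 3))
      (1 / (2 * Real.sqrt (-x) ^ 5)) x := by
    have h1 := hden.inv (by positivity :
      (3 * Real.sqrt (-x) ^ 3) ≠ 0)
    have h2 : HasDerivAt (fun y => 1 / (3 * Real.sqrt (-y) ^ 3))
        (-(3 * (3 * Real.sqrt (-x) ^ 2 * (-(1 / (2 * Real.sqrt (-x)))))) /
          (3 * Real.sqrt (-x) ^ 3) ^ 2) x := by
      have h1' : HasDerivAt (fun y => (3 * Real.sqrt (-y) ^ 3)⁻¹)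
          (-(3 * (3 * Real.sqrt (-x) ^ 2 * (-(1 / (2 * Real.sqrt (-x)))))) /
            (3 * Real.sqrt (-x) ^ 3) ^ 2) x := h1
      simpa only [one_div] using h1'
    convert h2 using 1
    field_simp
  have hqe := hq.exp
  have hN := hasDerivAt_NX Ai hx hu hv
  have h := hN.mul hqe
  have hfun : GX Ai = fun y => NX Ai y * Real.exp (1 / (3 * Real.sqrt (-y) ^ 3)) := rfl
  rw [hfun]
  refine h.congr_deriv ?_
  field_simp
  ring
end NegSide

lemma NX_nonneg (Ai : ℝ → ℝ) {x : ℝ} (hx : x ≤ -1) : 0 ≤ NX Ai x := by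
  have hx0 : x < 0 := lt_of_le_of_lt hx (by norm_num)
  have hs : 0 < Real.sqrt (-x) := Real.sqrt_pos.2 (by linarith)
  have hs1 : 1 ≤ Real.sqrt (-x) := by
    rw [show (1:ℝ) = Real.sqrt 1 from Real.sqrt_one.symm]
    exact Real.sqrt_le_sqrt (by linarith)
  set s := Real.sqrt (-x)
  set u := Ai x
  set v := deriv Ai x
  have hs2' : 1 ≤ s^2 := one_le_pow₀ hs1
  have hs3 : 1 ≤ s^3 := one_le_pow₀ hs1
  have hs4 : 1 ≤ s^4 := one_le_pow₀ hs1
  have heq : NX Ai x = (2*s^4*u^2 + 2*s^2*v^2 - u*v) / (2*s^3) := by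
    unfold NX
    rw [show Real.sqrt (-x) = s from rfl, show Ai x = u from rfl, show deriv Ai x = v from rfl]
    field_simp
  rw [heq]
  apply div_nonneg _ (by positivity)
  nlinarith [sq_nonneg (s*u - v), mul_nonneg (show (0:ℝ) ≤ s^2 - 1 by linarith)
    (sq_nonneg u), mul_nonneg (show (0:ℝ) ≤ s^2 - 1 by linarith) (sq_nonneg v),
    mul_nonneg (mul_nonneg (show (0:ℝ) ≤ s^2 - 1 by linarith)
      (show (0:ℝ) ≤ s^2 by positivity)) (sq_nonneg u)]

lemma NX_key (Ai : ℝ → ℝ) {x : ℝ} (hx : x ≤ -1) :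
    0 ≤ 2 * NX Ai x - 3 * (Ai x * deriv Ai x) := by
  have hx0 : x < 0 := lt_of_le_of_lt hx (by norm_num)
  have hs : 0 < Real.sqrt (-x) := Real.sqrt_pos.2 (by linarith)
  have hs1 : 1 ≤ Real.sqrt (-x) := by
    rw [show (1:ℝ) = Real.sqrt 1 from Real.sqrt_one.symm]
    exact Real.sqrt_le_sqrt (by linarith)
  set s := Real.sqrt (-x)
  set u := Ai x
  set v := deriv Ai x
  have hs2' : 1 ≤ s^2 := one_le_pow₀ hs1
  have hs3 : 1 ≤ s^3 := one_le_pow₀ hs1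
  have hs4 : 1 ≤ s^4 := one_le_pow₀ hs1
  have heq : 2 * NX Ai x - 3 * (u * v)
      = (2*s^4*u^2 + 2*s^2*v^2 - u*v - 3*(u*v)*s^3) / s^3 := by
    unfold NX
    rw [show Real.sqrt (-x) = s from rfl, show Ai x = u from rfl, show deriv Ai x = v from rfl]
    field_simp
  rw [heq]
  apply div_nonneg _ (by positivity)
  nlinarith [mul_nonneg (sq_nonneg (s*u - v)) (show (0:ℝ) ≤ 1 + 3*s^3 by positivity),
    mul_nonneg (show (0:ℝ) ≤ s^3 - 1 by linarith)
      (show (0:ℝ) ≤ s^2*u^2 + v^2 by positivity), hs]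

lemma su_le_NX (Ai : ℝ → ℝ) {x : ℝ} (hx : x ≤ -1) :
    Real.sqrt (-x) * Ai x ^ 2 ≤ (4/3) * NX Ai x := by
  have hx0 : x < 0 := lt_of_le_of_lt hx (by norm_num)
  have hs : 0 < Real.sqrt (-x) := Real.sqrt_pos.2 (by linarith)
  have hs1 : 1 ≤ Real.sqrt (-x) := by
    rw [show (1:ℝ) = Real.sqrt 1 from Real.sqrt_one.symm]
    exact Real.sqrt_le_sqrt (by linarith)
  set s := Real.sqrt (-x)
  set u := Ai x
  set v := deriv Ai x
  have hs2' : 1 ≤ s^2 := one_le_pow₀ hs1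
  have hs3 : 1 ≤ s^3 := one_le_pow₀ hs1
  have hs4 : 1 ≤ s^4 := one_le_pow₀ hs1
  have heq : (4/3) * NX Ai x - s * u^2 = (s^4*u^2 + 4*s^2*v^2 - 2*u*v) / (3*s^3) := by
    unfold NX
    rw [show Real.sqrt (-x) = s from rfl, show Ai x = u from rfl, show deriv Ai x = v from rfl]
    field_simp
    ring
  have h2 : (0:ℝ) ≤ (s^4*u^2 + 4*s^2*v^2 - 2*u*v) / (3*s^3) := by
    apply div_nonneg _ (by positivity)
    nlinarith [sq_nonneg (u - v), mul_nonneg (show (0:ℝ) ≤ s^4 - 1 by linarith)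
      (sq_nonneg u), mul_nonneg (show (0:ℝ) ≤ 4*s^2 - 1 by linarith) (sq_nonneg v)]
  linarith [heq ▸ h2]

lemma neg_side (Ai : ℝ → ℝ) (hAi : ContDiff ℝ 2 Ai)
    (hODE : ∀ x, deriv (deriv Ai) x = x * Ai x) :
    ∃ c2 > 0, ∀ x : ℝ, x < 0 → |Ai x| ≤ c2 * |x| ^ (-(1:ℝ)/4) := by
  have hAidiff : Differentiable ℝ Ai := hAi.differentiable (by norm_num)
  have hAi2 : ContDiff ℝ (1 + 1) Ai := hAi.of_le (by norm_num)
  have hAi' : Differentiable ℝ (deriv Ai) :=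
    (contDiff_succ_iff_deriv.mp hAi2).2.2.differentiable (by norm_num)
  have hu : ∀ x, HasDerivAt Ai (deriv Ai x) x := fun x => (hAidiff x).hasDerivAt
  have hv : ∀ x, HasDerivAt (deriv Ai) (x * Ai x) x := fun x =>
    hODE x ▸ (hAi' x).hasDerivAt
  -- monotonicity of GX on Iic (-1)
  have hmono : MonotoneOn (GX Ai) (Iic (-1)) := by
    apply monotoneOn_of_deriv_nonneg (convex_Iic _)
    · intro x hx
      have hx0 : x < 0 := lt_of_le_of_lt hx (by norm_num)
      exact ((hasDerivAt_GX Ai hx0 (hu x) (hv x)).continuousAt).continuousWithinAt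
    · intro x hx
      rw [interior_Iic] at hx
      have hx0 : x < 0 := lt_trans hx (by norm_num)
      exact ((hasDerivAt_GX Ai hx0 (hu x) (hv x)).differentiableAt).differentiableWithinAt
    · intro x hx
      rw [interior_Iic] at hx
      have hx0 : x < 0 := lt_trans hx (by norm_num)
      rw [(hasDerivAt_GX Ai hx0 (hu x) (hv x)).deriv]
      have h1 := NX_key Ai hx.le
      have hs : 0 < Real.sqrt (-x) := Real.sqrt_pos.2 (by linarith)
      have h2 : (0:ℝ) ≤ 1 / (4 * Real.sqrt (-x) ^ 5) := by positivity
      positivity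
  -- NX ≤ GX on Iic (-1)
  have hNG : ∀ x : ℝ, x ≤ -1 → NX Ai x ≤ GX Ai x := by
    intro x hx
    have hx0 : x < 0 := lt_of_le_of_lt hx (by norm_num)
    have hs : 0 < Real.sqrt (-x) := Real.sqrt_pos.2 (by linarith)
    unfold GX
    have : (1:ℝ) ≤ Real.exp (1 / (3 * Real.sqrt (-x) ^ 3)) :=
      Real.one_le_exp (by positivity)
    nlinarith [NX_nonneg Ai hx]
  set c0 := (4/3) * GX Ai (-1) with hc0def
  have hc0 : 0 ≤ c0 := by
    have h1 := NX_nonneg Ai (le_refl (-1))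
    have h2 := hNG (-1) (le_refl _)
    rw [hc0def]
    linarith
  -- main bound for x ≤ -1
  have hmain : ∀ x : ℝ, x ≤ -1 → Ai x ^ 2 * Real.sqrt (-x) ≤ c0 := by
    intro x hx
    have h1 := su_le_NX Ai hx
    have h2 := hNG x hx
    have h3 := hmono (mem_Iic.2 hx) (mem_Iic.2 (le_refl (-1))) hx
    rw [hc0def]
    nlinarith
  -- convert to rpow bound
  have hmain2 : ∀ x : ℝ, x ≤ -1 → |Ai x| ≤ Real.sqrt c0 * |x| ^ (-(1:ℝ)/4) := by
    intro x hx
    have hx0 : x < 0 := lt_of_le_of_lt hx (by norm_num)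
    have hxpos : 0 < -x := by linarith
    have hs : 0 < Real.sqrt (-x) := Real.sqrt_pos.2 hxpos
    have habs : |x| = -x := abs_of_neg hx0
    have h1 : Ai x ^ 2 ≤ c0 * (-x) ^ (-(1:ℝ)/2) := by
      have h2 : (-x) ^ (-(1:ℝ)/2) = (Real.sqrt (-x))⁻¹ := by
        rw [show -(1:ℝ)/2 = -(1/2) by norm_num, Real.rpow_neg hxpos.le,
          ← Real.sqrt_eq_rpow]
      rw [h2, ← div_eq_mul_inv, le_div_iff₀ hs]
      exact hmain x hx
    have h3 : |Ai x| = Real.sqrt (Ai x ^ 2) := (Real.sqrt_sq_eq_abs _).symm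
    have h4 : Real.sqrt (c0 * (-x) ^ (-(1:ℝ)/2))
        = Real.sqrt c0 * Real.sqrt ((-x) ^ (-(1:ℝ)/2)) := Real.sqrt_mul hc0 _
    have h5 : Real.sqrt ((-x) ^ (-(1:ℝ)/2)) = (-x) ^ (-(1:ℝ)/4) := by
      rw [Real.sqrt_eq_rpow, ← Real.rpow_mul hxpos.le]
      norm_num
    rw [h3, habs, ← h5, ← h4]
    exact Real.sqrt_le_sqrt h1
  -- bound on [-1, 0)
  obtain ⟨z, hz, hzmax⟩ := isCompact_Icc.exists_isMaxOn
    (nonempty_Icc.2 (by norm_num : (-1:ℝ) ≤ 0))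
    (continuous_abs.comp hAidiff.continuous).continuousOn
  set M := |Ai z| with hM
  have hM0 : 0 ≤ M := abs_nonneg _
  have hK0 : 0 ≤ Real.sqrt c0 := Real.sqrt_nonneg _
  refine ⟨Real.sqrt c0 + M + 1, by linarith, ?_⟩
  intro x hx
  have hrp : (0:ℝ) < |x| ^ (-(1:ℝ)/4) := Real.rpow_pos_of_pos (abs_pos.2 hx.ne) _
  rcases le_or_gt x (-1) with h | h
  · have := hmain2 x h
    nlinarith
  · have hx1 : x ∈ Icc (-1:ℝ) 0 := ⟨h.le, hx.le⟩
    have h7 : |Ai x| ≤ M := hzmax hx1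
    have h8 : (1:ℝ) ≤ |x| ^ (-(1:ℝ)/4) := by
      apply Real.one_le_rpow_of_pos_of_le_one_of_nonpos (abs_pos.2 hx.ne)
      · rw [abs_of_neg hx]; linarith
      · norm_num
    nlinarith


/-- Airy function pointwise bounds: let `Ai` be the classical Airy
function, i.e. the (twice continuously differentiable) solution of `Ai'' = x·Ai`
decaying at `+∞`, normalized by `Ai 0 = 1/(3^{2/3} Γ(2/3))`.  Then there is `c > 0`
with `|Ai x| ≤ c e^{−(2/3)x^{3/2}}` for `x ≥ 0` and `|Ai x| ≤ c |x|^{−1/4}` for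
`x < 0`. -/
theorem airy_pointwise_bounds
    (Ai : ℝ → ℝ) (hAi : ContDiff ℝ 2 Ai)
    (hODE : ∀ x, deriv (deriv Ai) x = x * Ai x)
    (hdecay : Filter.Tendsto Ai Filter.atTop (nhds 0))
    (hnorm : Ai 0 = 1 / (3 ^ ((2 : ℝ) / 3) * Real.Gamma (2 / 3))) :
    ∃ c > 0, (∀ x : ℝ, 0 ≤ x → |Ai x| ≤ c * Real.exp (-(2 / 3) * x ^ ((3 : ℝ) / 2))) ∧
      ∀ x : ℝ, x < 0 → |Ai x| ≤ c * |x| ^ (-(1 : ℝ) / 4) := by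
  obtain ⟨c1, hc1, hpos⟩ := pos_side Ai hAi hODE hdecay
  obtain ⟨c2, hc2, hneg⟩ := neg_side Ai hAi hODE
  refine ⟨max c1 c2, lt_of_lt_of_le hc1 (le_max_left _ _), ?_, ?_⟩
  · intro x hx
    calc |Ai x| ≤ c1 * phiA x := hpos x hx
      _ ≤ max c1 c2 * phiA x :=
        mul_le_mul_of_nonneg_right (le_max_left _ _) (phiA_pos x).le
      _ = max c1 c2 * Real.exp (-(2 / 3) * x ^ ((3 : ℝ) / 2)) := rfl
  · intro x hx
    have hrp : (0:ℝ) ≤ |x| ^ (-(1 : ℝ) / 4) :=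
      (Real.rpow_pos_of_pos (abs_pos.2 hx.ne) _).le
    calc |Ai x| ≤ c2 * |x| ^ (-(1 : ℝ) / 4) := hneg x hx
      _ ≤ max c1 c2 * |x| ^ (-(1 : ℝ) / 4) :=
        mul_le_mul_of_nonneg_right (le_max_right _ _) hrp
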